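/- Let H be a Hilbert space, C ⊆ H nonempty, S a semigroup generated by a subset Λ, and {T_s : s ∈ S} a representation of S on C such that for each t ∈ Λ there exist α, β ∈ ℝ with α‖T_t x − T_t y‖² + (1−α)‖x − T_t y‖² ≤ β‖T_t x − y‖² + (1−β)‖x − y‖² for all x, y ∈ C. Suppose μ is a left invariant mean on a suitable subspace X of ℓ∞(S), c ∈ C has bounded orbit, s ↦ ⟨T_s c, y⟩ ∈ X for each y ∈ H, and a ∈ H satisfies ⟨a, y⟩ = μ(s ↦ ⟨T_s c, y⟩) for all y. Then ‖a − T_t x‖ ≤ ‖a − x‖ for all t ∈ S and x ∈ C. -/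

import Mathlib

private def iterT {S : Type*} [Mul S] (t : S) (f : S → ℝ) : ℕ → S → ℝ
  | 0 => f
  | n+1 => fun s => iterT t f n (t * s)

private lemma iterT_zero {S : Type*} [Mul S] (t : S) (f : S → ℝ) : iterT t f 0 = f := rfl

private lemma iterT_succ {S : Type*} [Mul S] (t : S) (f : S → ℝ) (n : ℕ) :
    iterT t f (n+1) = fun s => iterT t f n (t * s) := rfl

theorem stmt16 {H : Type*} [NormedAddCommGroup H] [InnerProductSpace ℝ H] [CompleteSpace H]
    (C : Set H) (hCne : C.Nonempty)
    (S : Type*) [Semigroup S] (T : S → H → H)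
    (hmaps : ∀ s, ∀ x ∈ C, T s x ∈ C)
    (hrep : ∀ s t, ∀ x ∈ C, T (s * t) x = T s (T t x))
    -- Λ generates S, and each T_t (t ∈ Λ) is generalized hybrid
    (Λ : Set S) (hgen : Subsemigroup.closure Λ = ⊤)
    (hhybrid : ∀ t ∈ Λ, ∃ α β : ℝ, ∀ x ∈ C, ∀ y ∈ C,
      α * ‖T t x - T t y‖ ^ 2 + (1 - α) * ‖x - T t y‖ ^ 2 ≤
        β * ‖T t x - y‖ ^ 2 + (1 - β) * ‖x - y‖ ^ 2)
    -- X : a left-translation-invariant closed subspace of ℓ∞(S) containing constants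
    (X : Submodule ℝ (S → ℝ))
    (hXbdd : ∀ f ∈ X, ∃ M : ℝ, ∀ s, |f s| ≤ M)
    (hXconst : ∀ r : ℝ, (fun _ : S => r) ∈ X)
    (hXinv : ∀ f ∈ X, ∀ t : S, (fun s => f (t * s)) ∈ X)
    (hXclosed : ∀ f : S → ℝ, (∀ ε > 0, ∃ g ∈ X, ∀ s, |f s - g s| ≤ ε) → f ∈ X)
    -- μ : a left invariant mean on X
    (μ : (S → ℝ) → ℝ)
    (hadd : ∀ f ∈ X, ∀ g ∈ X, μ (f + g) = μ f + μ g)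
    (hsmul : ∀ (r : ℝ), ∀ f ∈ X, μ (r • f) = r * μ f)
    (hone : μ (fun _ : S => (1 : ℝ)) = 1)
    (hnorm : ∀ f ∈ X, ∀ M : ℝ, (∀ s, |f s| ≤ M) → |μ f| ≤ M)
    (hinv : ∀ f ∈ X, ∀ t : S, μ (fun s => f (t * s)) = μ f)
    -- c : a point of C with bounded orbit whose matrix coefficients lie in X
    (c : H) (hc : c ∈ C) (hbdd : ∃ M, ∀ s, ‖T s c‖ ≤ M)
    (hmem : ∀ y : H, (fun s => (inner ℝ (T s c) y : ℝ)) ∈ X)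
    -- a : the barycenter T_μ c
    (a : H) (ha : ∀ y : H, (inner ℝ a y : ℝ) = μ (fun s => (inner ℝ (T s c) y : ℝ))) :
    ∀ t : S, ∀ x ∈ C, ‖a - T t x‖ ≤ ‖a - x‖ := by
  -- μ of a constant
  have hμconst : ∀ r : ℝ, μ (fun _ : S => r) = r := by
    intro r
    have h1 : (fun _ : S => r) = r • (fun _ : S => (1:ℝ)) := by
      funext s; simp
    rw [h1, hsmul r _ (hXconst 1), hone, mul_one]
  -- μ is nonneg on nonneg functions of X
  have hμpos : ∀ g ∈ X, (∀ s, 0 ≤ g s) → 0 ≤ μ g := by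
    intro g hg hg0
    obtain ⟨B, hB⟩ := hXbdd g hg
    have hmem' : (g + fun _ : S => -B) ∈ X := X.add_mem hg (hXconst (-B))
    have h1 : μ (g + fun _ : S => -B) = μ g + (-B) := by
      rw [hadd g hg _ (hXconst (-B)), hμconst]
    have h2 : |μ (g + fun _ : S => -B)| ≤ B := by
      apply hnorm _ hmem' B
      intro s
      have hb := abs_le.mp (hB s)
      have := hg0 s
      have hB0 : (0:ℝ) ≤ B := le_trans (abs_nonneg _) (hB s)
      rw [Pi.add_apply, abs_le]
      constructor <;> simp <;> linarith
    rw [h1] at h2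
    have := (abs_le.mp h2).1
    linarith
  -- key step: attractiveness for generators
  have key : ∀ t ∈ Λ, ∀ x ∈ C, ‖a - T t x‖ ≤ ‖a - x‖ := by
    intro t ht x hx
    obtain ⟨α, β, hαβ⟩ := hhybrid t ht
    obtain ⟨M, hM⟩ := hbdd
    set z := T t x with hz_def
    have hzC : z ∈ C := hmaps t x hx
    -- the basic matrix coefficient functions
    set vx : S → ℝ := fun s => (inner ℝ (T s c) x : ℝ) with hvx_def
    set vz : S → ℝ := fun s => (inner ℝ (T s c) z : ℝ) with hvz_def
    set ux : S → ℝ := fun s => (inner ℝ (T (t * s) c) x : ℝ) with hux_def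
    set uz : S → ℝ := fun s => (inner ℝ (T (t * s) c) z : ℝ) with huz_def
    have hvxX : vx ∈ X := hmem x
    have hvzX : vz ∈ X := hmem z
    have huxX : ux ∈ X := hXinv _ (hmem x) t
    have huzX : uz ∈ X := hXinv _ (hmem z) t
    have hμvx : μ vx = (inner ℝ a x : ℝ) := (ha x).symm
    have hμvz : μ vz = (inner ℝ a z : ℝ) := (ha z).symm
    have hμux : μ ux = (inner ℝ a x : ℝ) := by
      have := hinv _ (hmem x) t
      rw [hux_def]; rw [this]; exact (ha x).symm
    have hμuz : μ uz = (inner ℝ a z : ℝ) := by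
      have := hinv _ (hmem z) t
      rw [huz_def]; rw [this]; exact (ha z).symm
    -- the function f whose mean is ‖a-x‖² - ‖a-z‖²
    set f : S → ℝ :=
      (fun _ : S => ‖x‖^2 - ‖z‖^2) + (-2*β) • ux + (-2*(1-β)) • vx
        + (2*α) • uz + (2*(1-α)) • vz with hf_def
    have h0m : (fun _ : S => ‖x‖^2 - ‖z‖^2) ∈ X := hXconst _
    have h1m : ((fun _ : S => ‖x‖^2 - ‖z‖^2) + (-2*β) • ux) ∈ X :=
      X.add_mem h0m (X.smul_mem _ huxX)
    have h2m : ((fun _ : S => ‖x‖^2 - ‖z‖^2) + (-2*β) • ux + (-2*(1-β)) • vx) ∈ X :=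
      X.add_mem h1m (X.smul_mem _ hvxX)
    have h3m : ((fun _ : S => ‖x‖^2 - ‖z‖^2) + (-2*β) • ux + (-2*(1-β)) • vx
        + (2*α) • uz) ∈ X := X.add_mem h2m (X.smul_mem _ huzX)
    have hfX : f ∈ X := X.add_mem h3m (X.smul_mem _ hvzX)
    have hμf : μ f = ‖x‖^2 - ‖z‖^2 - 2*(inner ℝ a x : ℝ) + 2*(inner ℝ a z : ℝ) := by
      rw [hf_def, hadd _ h3m _ (X.smul_mem _ hvzX), hadd _ h2m _ (X.smul_mem _ huzX),
        hadd _ h1m _ (X.smul_mem _ hvxX), hadd _ h0m _ (X.smul_mem _ huxX),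
        hμconst, hsmul _ _ huxX, hsmul _ _ hvxX, hsmul _ _ huzX, hsmul _ _ hvzX,
        hμux, hμvx, hμuz, hμvz]
      ring
    -- pointwise lower bound for f
    set q : S → ℝ := fun s => ‖T s c‖^2 with hq_def
    have hfq : ∀ s, (α - β) * (q (t * s) - q s) ≤ f s := by
      intro s
      have h1 := hαβ (T s c) (hmaps s c hc) x hx
      have h2 : T t (T s c) = T (t*s) c := (hrep t s c hc).symm
      rw [h2, ← hz_def] at h1
      have e1 : ‖T (t*s) c - z‖^2
          = ‖T (t*s) c‖^2 - 2 * (inner ℝ (T (t*s) c) z : ℝ) + ‖z‖^2 := norm_sub_sq_real _ _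
      have e2 : ‖T s c - z‖^2
          = ‖T s c‖^2 - 2 * (inner ℝ (T s c) z : ℝ) + ‖z‖^2 := norm_sub_sq_real _ _
      have e3 : ‖T (t*s) c - x‖^2
          = ‖T (t*s) c‖^2 - 2 * (inner ℝ (T (t*s) c) x : ℝ) + ‖x‖^2 := norm_sub_sq_real _ _
      have e4 : ‖T s c - x‖^2
          = ‖T s c‖^2 - 2 * (inner ℝ (T s c) x : ℝ) + ‖x‖^2 := norm_sub_sq_real _ _
      rw [e1, e2, e3, e4] at h1
      simp only [hf_def, hq_def, Pi.add_apply, Pi.smul_apply, smul_eq_mul,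
        hux_def, hvx_def, huz_def, hvz_def]
      nlinarith [h1]
    -- iterated translates of f
    have hiter_mem : ∀ n, iterT t f n ∈ X := by
      intro n; induction n with
      | zero => exact hfX
      | succ n ih => exact hXinv _ ih t
    have hiter_μ : ∀ n, μ (iterT t f n) = μ f := by
      intro n; induction n with
      | zero => rfl
      | succ n ih => exact (hinv _ (hiter_mem n) t).trans ih
    have hiter_bd : ∀ n s, (α - β) * (iterT t q (n+1) s - iterT t q n s) ≤ iterT t f n s := by
      intro n; induction n with
      | zero => intro s; exact hfq s
      | succ n ih => intro s; exact ih (t * s)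
    have hqbd : ∀ n s, 0 ≤ iterT t q n s ∧ iterT t q n s ≤ M^2 := by
      intro n; induction n with
      | zero =>
        intro s
        have hrw : iterT t q 0 s = ‖T s c‖^2 := rfl
        rw [hrw]
        constructor
        · exact sq_nonneg _
        · have := hM s; nlinarith [norm_nonneg (T s c)]
      | succ n ih => intro s; exact ih (t * s)
    -- partial sums
    have hF_mem : ∀ N, (fun s => ∑ n ∈ Finset.range N, iterT t f n s) ∈ X := by
      intro N; induction N with
      | zero => simpa using hXconst 0
      | succ N ih =>
        have heq : (fun s => ∑ n ∈ Finset.range (N+1), iterT t f n s)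
            = (fun s => ∑ n ∈ Finset.range N, iterT t f n s) + iterT t f N := by
          funext s; simp [Finset.sum_range_succ]
        rw [heq]; exact X.add_mem ih (hiter_mem N)
    have hF_μ : ∀ N, μ (fun s => ∑ n ∈ Finset.range N, iterT t f n s) = N * μ f := by
      intro N; induction N with
      | zero => simpa using hμconst 0
      | succ N ih =>
        have heq : (fun s => ∑ n ∈ Finset.range (N+1), iterT t f n s)
            = (fun s => ∑ n ∈ Finset.range N, iterT t f n s) + iterT t f N := by
          funext s; simp [Finset.sum_range_succ]
        rw [heq, hadd _ (hF_mem N) _ (hiter_mem N), ih, hiter_μ]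
        push_cast; ring
    have hF_bd : ∀ N s, -(|α - β| * M^2) ≤ ∑ n ∈ Finset.range N, iterT t f n s := by
      intro N s
      have htel : ∑ n ∈ Finset.range N, (iterT t q (n+1) s - iterT t q n s)
          = iterT t q N s - iterT t q 0 s :=
        Finset.sum_range_sub (fun n => iterT t q n s) N
      have hsum : (α - β) * (iterT t q N s - iterT t q 0 s)
          ≤ ∑ n ∈ Finset.range N, iterT t f n s := by
        rw [← htel, Finset.mul_sum]
        exact Finset.sum_le_sum (fun n _ => hiter_bd n s)
      have h1 := hqbd N s
      have h2 := hqbd 0 s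
      have habs : |(α - β) * (iterT t q N s - iterT t q 0 s)| ≤ |α - β| * M^2 := by
        rw [abs_mul]
        apply mul_le_mul_of_nonneg_left _ (abs_nonneg _)
        rw [abs_le]; constructor <;> linarith
      have := neg_abs_le ((α - β) * (iterT t q N s - iterT t q 0 s))
      linarith
    -- conclude μ f ≥ 0
    have hμf0 : 0 ≤ μ f := by
      by_contra hcon
      push_neg at hcon
      set K : ℝ := |α - β| * M^2 with hK_def
      have hK0 : 0 ≤ K := mul_nonneg (abs_nonneg _) (sq_nonneg _)
      obtain ⟨N, hN⟩ := exists_nat_gt (K / (-(μ f)))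
      have h0 : 0 < -(μ f) := by linarith
      have hKN : K < N * (-(μ f)) := (div_lt_iff₀ h0).mp hN
      have hmemK := X.add_mem (hF_mem N) (hXconst K)
      have hge : 0 ≤ μ ((fun s => ∑ n ∈ Finset.range N, iterT t f n s) + fun _ : S => K) := by
        apply hμpos _ hmemK
        intro s
        have := hF_bd N s
        simp only [Pi.add_apply]
        linarith
      have heq : μ ((fun s => ∑ n ∈ Finset.range N, iterT t f n s) + fun _ : S => K)
          = N * μ f + K := by
        rw [hadd _ (hF_mem N) _ (hXconst K), hF_μ, hμconst]
      rw [heq] at hge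
      nlinarith
    -- finish
    have ea1 : ‖a - x‖^2 = ‖a‖^2 - 2 * (inner ℝ a x : ℝ) + ‖x‖^2 := norm_sub_sq_real _ _
    have ea2 : ‖a - z‖^2 = ‖a‖^2 - 2 * (inner ℝ a z : ℝ) + ‖z‖^2 := norm_sub_sq_real _ _
    have hsq : ‖a - z‖^2 ≤ ‖a - x‖^2 := by rw [ea1, ea2]; linarith [hμf0, hμf.symm ▸ hμf0]
    nlinarith [norm_nonneg (a - z), norm_nonneg (a - x), hsq]
  -- extend from Λ to all of S
  intro t
  have ht : t ∈ Subsemigroup.closure Λ := by rw [hgen]; trivial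
  refine Subsemigroup.closure_induction (p := fun u _ => ∀ x ∈ C, ‖a - T u x‖ ≤ ‖a - x‖)
    (fun u hu => key u hu) ?_ ht
  intro u v hu hv pu pv x hx
  rw [hrep u v x hx]
  exact le_trans (pu (T v x) (hmaps v x hx)) (pv x hx)
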